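/- (Correctness of the FOQCS-LCU block encoding.) Let H = Σ_{i,j} c_{ij} P(i,j) with P(i,j) = ⊗_ℓ Z^{j_ℓ} X^{i_ℓ}, let λ = Σ_{i,j} |c_{ij}|, and define the 2n-qubit states |R⟩ = λ^{-1/2} Σ_{i,j} e^{i arg(c_{ij})} √|c_{ij}| |i⟩|j⟩ and |L⟩ = λ^{-1/2} Σ_{i,j} √|c_{ij}| |i⟩|j⟩. Let SELECT be the unitary on (ℂ²)^{⊗2n} ⊗ (ℂ²)^{⊗n} acting by SELECT (|i⟩|j⟩ ⊗ |φ⟩) = |i⟩|j⟩ ⊗ P(i,j)|φ⟩ (i.e., parallel CNOTs from the first register followed by CZs from the second). Then for every n-qubit vector φ, (⟨L| ⊗ I) · SELECT · (|R⟩ ⊗ I) φ = (1/λ) H φ. -/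

import Mathlib

open Matrix

noncomputable section

/-- Pauli `X`. -/
def X : Matrix (Fin 2) (Fin 2) ℂ := !![0, 1; 1, 0]

/-- Pauli `Z`. -/
def Z : Matrix (Fin 2) (Fin 2) ℂ := !![1, 0; 0, -1]

/-- The `n`-qubit operator `P(i,j) = ⊗_{ℓ=0}^{n-1} Z^{j_ℓ} X^{i_ℓ}`. -/
def P (n : ℕ) (i j : Fin n → Fin 2) :
    Matrix (Fin n → Fin 2) (Fin n → Fin 2) ℂ :=
  fun x y => ∏ ℓ, (Z ^ (j ℓ : ℕ) * X ^ (i ℓ : ℕ)) (x ℓ) (y ℓ)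

/-- The `2n`-qubit ancilla index: a pair of `n`-bit strings `(i, j)`. -/
abbrev Anc (n : ℕ) := (Fin n → Fin 2) × (Fin n → Fin 2)

/-- The right state-preparation state:
`|R⟩ = λ^{-1/2} Σ_{i,j} e^{i arg(c_{ij})} √|c_{ij}| |i⟩|j⟩`. -/
def Rvec (n : ℕ) (c : (Fin n → Fin 2) → (Fin n → Fin 2) → ℂ) (lam : ℝ) :
    Anc n → ℂ :=
  fun a => (Real.sqrt lam : ℂ)⁻¹ *
    Complex.exp (Complex.I * (c a.1 a.2).arg) * (Real.sqrt ‖c a.1 a.2‖ : ℂ)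

/-- The left state-preparation state: `|L⟩ = λ^{-1/2} Σ_{i,j} √|c_{ij}| |i⟩|j⟩`. -/
def Lvec (n : ℕ) (c : (Fin n → Fin 2) → (Fin n → Fin 2) → ℂ) (lam : ℝ) :
    Anc n → ℂ :=
  fun a => (Real.sqrt lam : ℂ)⁻¹ * (Real.sqrt ‖c a.1 a.2‖ : ℂ)

/-- `SELECT (|i⟩|j⟩ ⊗ |φ⟩) = |i⟩|j⟩ ⊗ P(i,j)|φ⟩`. -/
def SELECT (n : ℕ) :
    Matrix (Anc n × (Fin n → Fin 2)) (Anc n × (Fin n → Fin 2)) ℂ :=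
  fun x y => if x.1 = y.1 then P n y.1.1 y.1.2 x.2 y.2 else 0

/-- correctness of the FOQCS-LCU block encoding: with
`H = Σ_{i,j} c_{ij} P(i,j)` and `λ = Σ_{i,j}|c_{ij}| > 0`, for every `n`-qubit
vector `φ`, `(⟨L| ⊗ I) · SELECT · (|R⟩ ⊗ I) φ = (1/λ) H φ`. -/
theorem stmt8 (n : ℕ) (c : (Fin n → Fin 2) → (Fin n → Fin 2) → ℂ)
    (lam : ℝ) (hlam : lam = ∑ i, ∑ j, ‖c i j‖) (hpos : 0 < lam)
    (φ : (Fin n → Fin 2) → ℂ) :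
    (fun x => ∑ a : Anc n, (starRingEnd ℂ) (Lvec n c lam a) *
        (SELECT n).mulVec (fun p => Rvec n c lam p.1 * φ p.2) (a, x))
    = (lam : ℂ)⁻¹ • (∑ i, ∑ j, c i j • P n i j).mulVec φ := by
  funext x
  have key : ∀ a : Anc n,
      (starRingEnd ℂ) (Lvec n c lam a) * Rvec n c lam a = (lam : ℂ)⁻¹ * c a.1 a.2 := by
    intro a
    simp only [Lvec, Rvec, _root_.map_mul, Complex.conj_ofReal, map_inv₀]
    have h1 : ((Real.sqrt lam : ℝ) : ℂ)⁻¹ * ((Real.sqrt lam : ℝ) : ℂ)⁻¹ = (lam : ℂ)⁻¹ := by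
      rw [← mul_inv]; norm_cast; rw [Real.mul_self_sqrt hpos.le]
    have h2 : ((Real.sqrt ‖c a.1 a.2‖ : ℝ) : ℂ) *
        ((Real.sqrt ‖c a.1 a.2‖ : ℝ) : ℂ) = (‖c a.1 a.2‖ : ℂ) := by
      norm_cast; exact Real.mul_self_sqrt (norm_nonneg _)
    have h3 : (‖c a.1 a.2‖ : ℂ) * Complex.exp (Complex.I * (c a.1 a.2).arg)
        = c a.1 a.2 := by
      rw [mul_comm Complex.I]; exact Complex.norm_mul_exp_arg_mul_I _
    calc ((Real.sqrt lam : ℝ) : ℂ)⁻¹ * ((Real.sqrt ‖c a.1 a.2‖ : ℝ) : ℂ) *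
        (((Real.sqrt lam : ℝ) : ℂ)⁻¹ * Complex.exp (Complex.I * (c a.1 a.2).arg) *
          ((Real.sqrt ‖c a.1 a.2‖ : ℝ) : ℂ))
        = (((Real.sqrt lam : ℝ) : ℂ)⁻¹ * ((Real.sqrt lam : ℝ) : ℂ)⁻¹) *
            ((((Real.sqrt ‖c a.1 a.2‖ : ℝ) : ℂ) *
              ((Real.sqrt ‖c a.1 a.2‖ : ℝ) : ℂ)) *
              Complex.exp (Complex.I * (c a.1 a.2).arg)) := by ring
      _ = (lam : ℂ)⁻¹ * c a.1 a.2 := by rw [h1, h2, h3]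
  have step : ∀ a : Anc n,
      (SELECT n).mulVec (fun p => Rvec n c lam p.1 * φ p.2) (a, x)
        = Rvec n c lam a * ∑ y, P n a.1 a.2 x y * φ y := by
    intro a
    simp only [Matrix.mulVec, dotProduct, SELECT]
    rw [Fintype.sum_prod_type]
    rw [Finset.sum_eq_single a]
    · simp [Finset.mul_sum]; ring_nf
      exact Finset.sum_congr rfl fun y _ => by ring
    · intro b _ hb
      simp [hb.symm]
    · simp
  simp only [step]
  have : ∀ a : Anc n, (starRingEnd ℂ) (Lvec n c lam a) *
      (Rvec n c lam a * ∑ y, P n a.1 a.2 x y * φ y)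
      = (lam : ℂ)⁻¹ * (c a.1 a.2 * ∑ y, P n a.1 a.2 x y * φ y) := by
    intro a; rw [← mul_assoc, key, mul_assoc]
  simp only [this]
  rw [← Finset.mul_sum]
  simp only [Pi.smul_apply, smul_eq_mul, Matrix.mulVec, dotProduct, Matrix.sum_apply,
    Matrix.smul_apply, Fintype.sum_prod_type]
  congr 1
  simp_rw [Finset.mul_sum, Finset.sum_mul, ← mul_assoc]
  calc (∑ i, ∑ j, ∑ y, c i j * P n i j x y * φ y)
      = ∑ i, ∑ y, ∑ j, c i j * P n i j x y * φ y :=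
        Finset.sum_congr rfl fun i _ => Finset.sum_comm
    _ = ∑ y, ∑ i, ∑ j, c i j * P n i j x y * φ y := Finset.sum_comm
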